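/- arXiv:2008.10249 — 2 statements merged into one kernel-verified Lean document; each statement's English description precedes it below -/
import Mathlib

section
/- Let $P_{Z}$ be a probability measure on $\mathbb{R}^n$ absolutely continuous with respect to the standard Gaussian measure $P_{Y} = \mathcal{N}(0, I_n)$, with finite second moment $\mathbb{E}[\|Z\|^2]$ and differential entropy $h(Z)$. Then $\mathbb{E}[\|Z\|^2] + n - 2n\sqrt{\frac{1}{2\pi e} e^{\frac{2}{n}h(Z)}} \leq 2 D(P_{Z} \| P_{Y})$, where $D$ denotes the Kullback–Leibler divergence. Equality holds if and only if $h(Z) = \frac{n}{2}\ln(2\pi e)$. -/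
open MeasureTheory Real

noncomputable def stdGaussianDensity (n : ℕ) (x : EuclideanSpace ℝ (Fin n)) : ℝ :=
  (2 * π) ^ (-(n : ℝ) / 2) * Real.exp (-‖x‖ ^ 2 / 2)

noncomputable def stdGaussian (n : ℕ) : Measure (EuclideanSpace ℝ (Fin n)) :=
  volume.withDensity fun x => ENNReal.ofReal (stdGaussianDensity n x)

/-- For `P_Z ≪ γ = N(0, Iₙ)` with density `f`, finite second moment `E`, differential
entropy `h` and relative entropy `D = D(P_Z ‖ γ)`, we have
`E + n − 2n √((1/(2πe)) e^{2h/n}) ≤ 2 D`, with equality iff `h = (n/2) ln(2πe)`. -/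
theorem stmt1 (n : ℕ) (hn : 0 < n)
    (μ : Measure (EuclideanSpace ℝ (Fin n))) [IsProbabilityMeasure μ]
    (f : EuclideanSpace ℝ (Fin n) → ℝ)
    (hμ : μ = volume.withDensity fun x => ENNReal.ofReal (f x))
    (hac : μ ≪ stdGaussian n)
    (hE2 : Integrable (fun x => ‖x‖ ^ 2) μ)
    (hlog : Integrable (fun x => Real.log (f x)) μ)
    (hDint : Integrable (fun x => Real.log (f x / stdGaussianDensity n x)) μ)
    (E h D : ℝ)
    (hE : E = ∫ x, ‖x‖ ^ 2 ∂μ)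
    (hh : h = -∫ x, Real.log (f x) ∂μ)
    (hD : D = ∫ x, Real.log (f x / stdGaussianDensity n x) ∂μ) :
    E + n - 2 * n * Real.sqrt ((1 / (2 * π * Real.exp 1)) * Real.exp ((2 / n) * h)) ≤ 2 * D ∧
    (E + n - 2 * n * Real.sqrt ((1 / (2 * π * Real.exp 1)) * Real.exp ((2 / n) * h)) = 2 * D ↔
      h = ((n : ℝ) / 2) * Real.log (2 * π * Real.exp 1)) := by
  have hγpos : ∀ x, 0 < stdGaussianDensity n x := by
    intro x
    unfold stdGaussianDensity
    positivity
  -- a.e. positivity of f w.r.t. μ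
  obtain ⟨g, hgm, hgle, hgint⟩ :=
    exists_measurable_le_lintegral_eq (μ := volume) (fun x => ENNReal.ofReal (f x))
  have hfin : ∫⁻ x, ENNReal.ofReal (f x) ∂(volume) = 1 := by
    have h1 := measure_univ (μ := μ)
    rw [hμ, withDensity_apply _ MeasurableSet.univ, setLIntegral_univ] at h1
    exact h1
  have hgfin : ∫⁻ x, g x ∂(volume) = 1 := by rw [← hgint, hfin]
  have hs : MeasurableSet {x | g x = 0} := hgm (measurableSet_singleton 0)
  have hsetzero : μ {x | g x = 0} = 0 := by
    rw [hμ, withDensity_apply _ hs]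
    have hAg : ∫⁻ x in {x | g x = 0}, g x ∂(volume) = 0 := by
      rw [setLIntegral_congr_fun hs (show Set.EqOn g (fun _ => 0) {x | g x = 0} from fun x hx => hx)]
      simp
    have hBg_le : ∫⁻ x in {x | g x = 0}ᶜ, g x ∂(volume) ≤
        ∫⁻ x in {x | g x = 0}ᶜ, ENNReal.ofReal (f x) ∂(volume) :=
      lintegral_mono fun x => hgle x
    have hBg_ne : ∫⁻ x in {x | g x = 0}ᶜ, g x ∂(volume) ≠ ⊤ := by
      refine ne_top_of_le_ne_top ?_ (setLIntegral_le_lintegral _ _)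
      rw [hgfin]; exact ENNReal.one_ne_top
    have hsplitf := lintegral_add_compl (μ := volume)
      (fun x => ENNReal.ofReal (f x)) hs
    have hsplitg := lintegral_add_compl (μ := volume) g hs
    -- A_f + B_f = A_g + B_g, with A_g = 0 and B_g ≤ B_f ⇒ A_f = 0
    have key : ∫⁻ x in {x | g x = 0}, ENNReal.ofReal (f x) ∂(volume) +
        ∫⁻ x in {x | g x = 0}ᶜ, g x ∂(volume) ≤
        0 + ∫⁻ x in {x | g x = 0}ᶜ, g x ∂(volume) := by
      calc ∫⁻ x in {x | g x = 0}, ENNReal.ofReal (f x) ∂(volume) +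
            ∫⁻ x in {x | g x = 0}ᶜ, g x ∂(volume)
          ≤ ∫⁻ x in {x | g x = 0}, ENNReal.ofReal (f x) ∂(volume) +
            ∫⁻ x in {x | g x = 0}ᶜ, ENNReal.ofReal (f x) ∂(volume) :=
            add_le_add le_rfl hBg_le
        _ = ∫⁻ x, ENNReal.ofReal (f x) ∂(volume) := hsplitf
        _ = ∫⁻ x, g x ∂(volume) := hgint
        _ = ∫⁻ x in {x | g x = 0}, g x ∂(volume) +
            ∫⁻ x in {x | g x = 0}ᶜ, g x ∂(volume) := hsplitg.symm
        _ = 0 + ∫⁻ x in {x | g x = 0}ᶜ, g x ∂(volume) := by rw [hAg]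
    have := (ENNReal.add_le_add_iff_right hBg_ne).mp key
    exact le_antisymm this zero_le
  have hfpos : ∀ᵐ x ∂μ, 0 < f x := by
    rw [ae_iff]
    refine le_antisymm (le_trans (measure_mono ?_) hsetzero.le) zero_le
    intro x hx
    have hfx : f x ≤ 0 := not_lt.mp hx
    have : g x ≤ ENNReal.ofReal (f x) := hgle x
    rw [ENNReal.ofReal_eq_zero.mpr hfx] at this
    exact le_antisymm this zero_le
  -- log of the Gaussian density
  have hlogγ : ∀ x : EuclideanSpace ℝ (Fin n), Real.log (stdGaussianDensity n x)
      = (-(n : ℝ) / 2) * Real.log (2 * π) - ‖x‖ ^ 2 / 2 := by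
    intro x
    unfold stdGaussianDensity
    rw [Real.log_mul (Real.rpow_pos_of_pos (by positivity) _).ne' (Real.exp_ne_zero _),
      Real.log_rpow (by positivity), Real.log_exp]
    ring
  have hintγ : Integrable (fun x => Real.log (stdGaussianDensity n x)) μ := by
    have : Integrable (fun x : EuclideanSpace ℝ (Fin n) =>
        (-(n : ℝ) / 2) * Real.log (2 * π) - ‖x‖ ^ 2 / 2) μ :=
      (integrable_const _).sub (hE2.div_const 2)
    exact this.congr (Filter.Eventually.of_forall fun x => (hlogγ x).symm)
  have hIγ : ∫ x, Real.log (stdGaussianDensity n x) ∂μ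
      = (-(n : ℝ) / 2) * Real.log (2 * π) - E / 2 := by
    rw [integral_congr_ae (Filter.Eventually.of_forall hlogγ),
      integral_sub (integrable_const _) (hE2.div_const 2), integral_const, integral_div,
      probReal_univ, ← hE]
    simp
  have hI : ∫ x, Real.log (f x) ∂μ = -h := by rw [hh]; ring
  have hae : (fun x => Real.log (f x / stdGaussianDensity n x)) =ᵐ[μ]
      fun x => Real.log (f x) - Real.log (stdGaussianDensity n x) := by
    filter_upwards [hfpos] with x hx
    exact Real.log_div hx.ne' (hγpos x).ne'
  have hDval : D = -h + ((n : ℝ) / 2) * Real.log (2 * π) + E / 2 := by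
    rw [hD, integral_congr_ae hae, integral_sub hlog hintγ, hIγ, hI]
    ring
  -- arithmetic
  have hnpos : (0 : ℝ) < n := by exact_mod_cast hn
  set s : ℝ := h / n - Real.log (2 * π) / 2 - 1 / 2 with hsdef
  have hhs : h = n * s + n * Real.log (2 * π) / 2 + n / 2 := by
    rw [hsdef]; field_simp; ring
  have hsqrt : Real.sqrt ((1 / (2 * π * Real.exp 1)) * Real.exp ((2 / n) * h))
      = Real.exp s := by
    have hA : (1 / (2 * π * Real.exp 1)) * Real.exp ((2 / n) * h) = (Real.exp s) ^ 2 := by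
      rw [sq, ← Real.exp_add]
      have h1 : s + s = (2 / n) * h + (-(Real.log (2 * π)) + -1) := by
        rw [hsdef]; field_simp; ring
      rw [h1, Real.exp_add, Real.exp_add, Real.exp_neg, Real.exp_neg,
        Real.exp_log (by positivity)]
      field_simp
    rw [hA, Real.sqrt_sq (Real.exp_pos s).le]
  clear hsdef
  clear_value s
  have hexp := Real.add_one_le_exp s
  have hlog2πe : Real.log (2 * π * Real.exp 1) = Real.log (2 * π) + 1 := by
    rw [Real.log_mul (by positivity) (Real.exp_ne_zero 1), Real.log_exp]
  constructor
  · rw [hDval, hsqrt]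
    linarith [mul_le_mul_of_nonneg_left hexp hnpos.le]
  · rw [hDval, hsqrt, hlog2πe]
    constructor
    · intro heq
      have h2 : (n : ℝ) * Real.exp s = n * (s + 1) := by linarith
      have hse : Real.exp s = s + 1 := mul_left_cancel₀ hnpos.ne' h2
      have hs0 : s = 0 := by
        by_contra hne
        have := Real.add_one_lt_exp hne
        linarith
      rw [hs0] at hhs
      rw [hhs]; ring
    · intro hh0
      have hns : (n : ℝ) * s = n * 0 := by rw [hh0] at hhs; linarith
      have hs0 : s = 0 := mul_left_cancel₀ hnpos.ne' hns
      rw [hs0] at hhs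
      rw [hs0, Real.exp_zero, hhs]
      ring
end

section
/- Let $\gamma = \mathcal{N}(0, I_n)$ on $\mathbb{R}^n$ and let $\bar{A} \subseteq \mathbb{R}^n$ be a measurable cone with $\gamma(\bar{A}) > 0$. Let $X_A \sim \gamma_A$ where $\gamma_A(C) = \gamma(\bar{A} \cap C)/\gamma(\bar{A})$. Then the differential entropy of $X_A$ equals $h(X_A) = \frac{n}{2} \ln\left(2\pi e \, (\gamma(\bar{A}))^{2/n}\right)$. -/
open MeasureTheory Real

section Aux

open Set ENNReal

variable {n : ℕ}

/-- Full-space integrability of a Gaussian-type function on Euclidean space. -/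
lemma aux_integrable_gauss (n : ℕ) {b : ℝ} (hb : 0 < b) :
    Integrable (fun x : EuclideanSpace ℝ (Fin n) => Real.exp (-(b * ‖x‖ ^ 2))) := by
  have h := (GaussianFourier.integrable_cexp_neg_mul_sq_norm_add_of_euclideanSpace (ι := Fin n)
      (b := (b : ℂ)) (by simpa using hb) 0 0).norm
  refine h.congr (Filter.Eventually.of_forall fun x => ?_)
  simp only [Complex.norm_exp]
  congr 1
  simp [← Complex.ofReal_pow]

/-- Integrability of the second-moment integrand. -/
lemma aux_integrable_sq_gauss (n : ℕ) :
    Integrable (fun x : EuclideanSpace ℝ (Fin n) =>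
      ‖x‖ ^ 2 / 2 * Real.exp (-(‖x‖ ^ 2 / 2))) := by
  have hg := (aux_integrable_gauss n (b := 1/4) (by norm_num)).const_mul 4
  refine hg.mono ?_ (Filter.Eventually.of_forall fun x => ?_)
  · apply Continuous.aestronglyMeasurable
    fun_prop
  · have ht0 : (0:ℝ) ≤ ‖x‖ ^ 2 := sq_nonneg _
    set t := ‖x‖ ^ 2 with ht
    rw [Real.norm_eq_abs, Real.norm_eq_abs, abs_of_nonneg (by positivity),
      abs_of_nonneg (by positivity)]
    have h1 : t/2 ≤ 4 * Real.exp (t/4) := by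
      have h2 := Real.add_one_le_exp (t/4)
      nlinarith [Real.exp_pos (t/4)]
    calc t/2 * Real.exp (-(t/2)) ≤ (4 * Real.exp (t/4)) * Real.exp (-(t/2)) :=
          mul_le_mul_of_nonneg_right h1 (Real.exp_pos _).le
      _ = 4 * Real.exp (-(1/4 * t)) := by
          rw [mul_assoc, ← Real.exp_add]
          congr 2
          ring

/-- Slice identity. -/
lemma aux_slice {u : ℝ} (hu : 0 < u) :
    ∫⁻ s in Set.Ioi (1 : ℝ), ENNReal.ofReal (u * Real.exp (-(s * u))) =
      ENNReal.ofReal (Real.exp (-u)) := by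
  have hint : IntegrableOn (fun s : ℝ => u * Real.exp (-(s * u))) (Set.Ioi 1) := by
    have h : IntegrableOn (fun x : ℝ => u * Real.exp (-u * x)) (Set.Ioi 1) :=
      (exp_neg_integrableOn_Ioi 1 hu).const_mul u
    refine h.congr_fun (fun x _ => ?_) measurableSet_Ioi
    rw [mul_comm x u, ← neg_mul]
  rw [← ofReal_integral_eq_lintegral_ofReal hint
    (Filter.Eventually.of_forall fun x => by positivity)]
  congr 1
  have hcomm : ∀ x ∈ Set.Ioi (1:ℝ), u * Real.exp (-(x * u)) = u * Real.exp (-(u * x)) :=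
    fun x _ => by rw [mul_comm x u]
  rw [setIntegral_congr_fun measurableSet_Ioi hcomm, integral_const_mul]
  have h2 : ∫ x in Set.Ioi (1:ℝ), Real.exp (-(u * x)) = u⁻¹ * Real.exp (-u) := by
    have h3 := integral_comp_mul_left_Ioi (fun x => Real.exp (-x)) 1 hu
    simp only [mul_one, smul_eq_mul] at h3
    rw [h3, integral_exp_neg_Ioi]
  rw [h2]
  field_simp

/-- Scaling identity for a cone. -/
lemma aux_scaling (hn : 0 < n) (Abar : Set (EuclideanSpace ℝ (Fin n)))
    (hmeas : MeasurableSet Abar)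
    (hcone : ∀ x ∈ Abar, ∀ t : ℝ, 0 < t → t • x ∈ Abar) {s : ℝ} (hs : 0 < s) :
    ∫⁻ x in Abar, ENNReal.ofReal (‖x‖ ^ 2 / 2 * Real.exp (-(s * (‖x‖ ^ 2 / 2)))) =
      ENNReal.ofReal (s ^ (-(n : ℝ) / 2 - 1)) *
        ∫⁻ x in Abar, ENNReal.ofReal (‖x‖ ^ 2 / 2 * Real.exp (-(‖x‖ ^ 2 / 2))) := by
  set r : ℝ := s ^ (-(1:ℝ)/2) with hrdef
  have hr : 0 < r := Real.rpow_pos_of_pos hs _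
  have hr2 : r ^ 2 = s⁻¹ := by
    rw [hrdef, ← Real.rpow_natCast (s ^ (-(1:ℝ)/2)) 2, ← Real.rpow_mul hs.le]
    norm_num
    exact Real.rpow_neg_one s
  have hAiff : ∀ x : EuclideanSpace ℝ (Fin n), r • x ∈ Abar ↔ x ∈ Abar := by
    intro x
    constructor
    · intro h
      have h2 := hcone _ h r⁻¹ (inv_pos.2 hr)
      rwa [inv_smul_smul₀ hr.ne'] at h2
    · intro h; exact hcone _ h r hr
  set f1 : EuclideanSpace ℝ (Fin n) → ℝ≥0∞ :=
    fun x => ENNReal.ofReal (‖x‖ ^ 2 / 2 * Real.exp (-(s * (‖x‖ ^ 2 / 2)))) with hf1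
  set g1 : EuclideanSpace ℝ (Fin n) → ℝ≥0∞ :=
    fun x => ENNReal.ofReal (‖x‖ ^ 2 / 2 * Real.exp (-(‖x‖ ^ 2 / 2))) with hg1
  have hf1m : Measurable f1 := by
    apply Measurable.ennreal_ofReal
    fun_prop
  set F := Abar.indicator f1 with hFdef
  have hFm : Measurable F := hf1m.indicator hmeas
  have hcomp : ∀ x, F (r • x) = ENNReal.ofReal s⁻¹ * Abar.indicator g1 x := by
    intro x
    by_cases hx : x ∈ Abar
    · rw [hFdef, Set.indicator_of_mem ((hAiff x).2 hx), Set.indicator_of_mem hx, hf1, hg1]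
      dsimp only
      have hnorm : ‖r • x‖ ^ 2 = s⁻¹ * ‖x‖ ^ 2 := by
        rw [norm_smul, mul_pow, Real.norm_eq_abs, sq_abs, hr2]
      rw [hnorm, ← ENNReal.ofReal_mul (inv_pos.2 hs).le]
      congr 1
      have hss : s * (s⁻¹ * ‖x‖ ^ 2 / 2) = ‖x‖ ^ 2 / 2 := by
        field_simp
      rw [hss]
      ring
    · rw [hFdef, Set.indicator_of_notMem (fun h => hx ((hAiff x).1 h)),
        Set.indicator_of_notMem hx, mul_zero]
  have hmap := Measure.map_addHaar_smul (volume : Measure (EuclideanSpace ℝ (Fin n))) hr.ne'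
  rw [finrank_euclideanSpace_fin] at hmap
  have habs : |((r : ℝ) ^ n)⁻¹| = s ^ ((n:ℝ)/2) := by
    rw [abs_of_nonneg (by positivity), hrdef, ← Real.rpow_natCast (s ^ (-(1:ℝ)/2)) n,
      ← Real.rpow_mul hs.le, ← Real.rpow_neg hs.le]
    congr 1
    ring
  have key : ∫⁻ x, F (r • x) = ENNReal.ofReal (s ^ ((n:ℝ)/2)) * ∫⁻ x, F x := by
    rw [← lintegral_map hFm (measurable_const_smul r), hmap, lintegral_smul_measure, habs, smul_eq_mul]
  have lhs : ∫⁻ x, F (r • x) = ENNReal.ofReal s⁻¹ * ∫⁻ x in Abar, g1 x := by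
    simp_rw [hcomp]
    rw [lintegral_const_mul' _ _ ENNReal.ofReal_ne_top, lintegral_indicator hmeas]
  have hIF : ∫⁻ x, F x = ∫⁻ x in Abar, f1 x := lintegral_indicator hmeas f1
  have hmain : ENNReal.ofReal s⁻¹ * ∫⁻ x in Abar, g1 x =
      ENNReal.ofReal (s ^ ((n:ℝ)/2)) * ∫⁻ x in Abar, f1 x := by
    rw [← lhs, key, hIF]
  calc ∫⁻ x in Abar, f1 x
      = ENNReal.ofReal (s ^ (-(n:ℝ)/2)) *
          (ENNReal.ofReal (s ^ ((n:ℝ)/2)) * ∫⁻ x in Abar, f1 x) := by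
        rw [← mul_assoc, ← ENNReal.ofReal_mul (Real.rpow_nonneg hs.le _),
          ← Real.rpow_add hs]
        rw [show -(n:ℝ)/2 + (n:ℝ)/2 = 0 by ring, Real.rpow_zero]
        simp
    _ = ENNReal.ofReal (s ^ (-(n:ℝ)/2)) * (ENNReal.ofReal s⁻¹ * ∫⁻ x in Abar, g1 x) := by
        rw [← hmain]
    _ = ENNReal.ofReal (s ^ (-(n:ℝ)/2 - 1)) * ∫⁻ x in Abar, g1 x := by
        rw [← mul_assoc, ← ENNReal.ofReal_mul (Real.rpow_nonneg hs.le _)]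
        congr 2
        rw [← Real.rpow_neg_one s, ← Real.rpow_add hs, sub_eq_add_neg]

/-- The key moment identity: on a cone, the conditional second moment of the Gaussian is `n/2`. -/
lemma aux_moment (hn : 0 < n) (Abar : Set (EuclideanSpace ℝ (Fin n)))
    (hmeas : MeasurableSet Abar)
    (hcone : ∀ x ∈ Abar, ∀ t : ℝ, 0 < t → t • x ∈ Abar) :
    ∫ x in Abar, ‖x‖ ^ 2 / 2 * Real.exp (-(‖x‖ ^ 2 / 2)) =
      ((n : ℝ) / 2) * ∫ x in Abar, Real.exp (-(‖x‖ ^ 2 / 2)) := by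
  haveI : Nonempty (Fin n) := ⟨⟨0, hn⟩⟩
  have hKint : IntegrableOn
      (fun x : EuclideanSpace ℝ (Fin n) => ‖x‖ ^ 2 / 2 * Real.exp (-(‖x‖ ^ 2 / 2))) Abar :=
    (aux_integrable_sq_gauss n).integrableOn
  have hJint : IntegrableOn
      (fun x : EuclideanSpace ℝ (Fin n) => Real.exp (-(‖x‖ ^ 2 / 2))) Abar := by
    refine ((aux_integrable_gauss n (b := 1/2) (by norm_num)).congr ?_).integrableOn
    refine Filter.Eventually.of_forall fun x => ?_
    dsimp only
    congr 1
    ring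
  set K : ℝ≥0∞ := ∫⁻ x in Abar, ENNReal.ofReal (‖x‖ ^ 2 / 2 * Real.exp (-(‖x‖ ^ 2 / 2)))
    with hKdef
  set J : ℝ≥0∞ := ∫⁻ x in Abar, ENNReal.ofReal (Real.exp (-(‖x‖ ^ 2 / 2))) with hJdef
  have hKr : ENNReal.ofReal (∫ x in Abar, ‖x‖ ^ 2 / 2 * Real.exp (-(‖x‖ ^ 2 / 2))) = K :=
    ofReal_integral_eq_lintegral_ofReal hKint (Filter.Eventually.of_forall fun x => by positivity)
  have hJr : ENNReal.ofReal (∫ x in Abar, Real.exp (-(‖x‖ ^ 2 / 2))) = J :=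
    ofReal_integral_eq_lintegral_ofReal hJint (Filter.Eventually.of_forall fun x => by positivity)
  have hKtop : K ≠ ⊤ := by rw [← hKr]; exact ENNReal.ofReal_ne_top
  have hstep1 : J = ∫⁻ x in Abar, ∫⁻ t in Set.Ioi (1:ℝ),
      ENNReal.ofReal (‖x‖ ^ 2 / 2 * Real.exp (-(t * (‖x‖ ^ 2 / 2)))) := by
    refine lintegral_congr_ae ?_
    have h0 : ∀ᵐ x ∂(volume.restrict Abar : Measure (EuclideanSpace ℝ (Fin n))), x ≠ 0 := by
      refine ae_restrict_of_ae ?_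
      have hsing : (volume : Measure (EuclideanSpace ℝ (Fin n))) {0} = 0 := measure_singleton 0
      rw [ae_iff]
      have hset : {a : EuclideanSpace ℝ (Fin n) | ¬ a ≠ 0} = {0} := by ext x; simp
      rw [hset, hsing]
    filter_upwards [h0] with x hx
    have hn0 : 0 < ‖x‖ := norm_pos_iff.2 hx
    have hu : 0 < ‖x‖ ^ 2 / 2 := by positivity
    exact (aux_slice hu).symm
  have hswap : (∫⁻ x in Abar, ∫⁻ t in Set.Ioi (1:ℝ),
        ENNReal.ofReal (‖x‖ ^ 2 / 2 * Real.exp (-(t * (‖x‖ ^ 2 / 2))))) =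
      ∫⁻ t in Set.Ioi (1:ℝ), ∫⁻ x in Abar,
        ENNReal.ofReal (‖x‖ ^ 2 / 2 * Real.exp (-(t * (‖x‖ ^ 2 / 2)))) := by
    refine lintegral_lintegral_swap ?_
    apply Measurable.aemeasurable
    apply Measurable.ennreal_ofReal
    fun_prop
  have ha : (-(n:ℝ)/2 - 1) < -1 := by
    have hn' : (0:ℝ) < n := by exact_mod_cast hn
    have : 0 < (n:ℝ)/2 := by positivity
    linarith
  have hIoi : (∫⁻ t in Set.Ioi (1:ℝ), ENNReal.ofReal (t ^ (-(n:ℝ)/2 - 1))) =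
      ENNReal.ofReal (2/(n:ℝ)) := by
    rw [← ofReal_integral_eq_lintegral_ofReal (integrableOn_Ioi_rpow_of_lt ha one_pos) ?_]
    · rw [integral_Ioi_rpow_of_lt ha one_pos, Real.one_rpow]
      congr 1
      have hn' : (n:ℝ) ≠ 0 := Nat.cast_ne_zero.2 hn.ne'
      field_simp
      rw [show -(n:ℝ) - 2 + 2 = -n by ring, div_neg, neg_neg, div_self hn']
    · filter_upwards [ae_restrict_mem measurableSet_Ioi] with t ht
      exact Real.rpow_nonneg (le_of_lt (lt_trans one_pos ht)) _
  have hJK : J = ENNReal.ofReal (2/(n:ℝ)) * K := by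
    rw [hstep1, hswap,
      setLIntegral_congr_fun measurableSet_Ioi (
        fun t (ht : t ∈ Set.Ioi (1:ℝ)) =>
          aux_scaling hn Abar hmeas hcone (lt_trans one_pos ht)),
      lintegral_mul_const' K _ hKtop, hIoi]
  have hJnn : 0 ≤ ∫ x in Abar, Real.exp (-(‖x‖ ^ 2 / 2)) :=
    setIntegral_nonneg hmeas fun x _ => (Real.exp_pos _).le
  have hKnn : 0 ≤ ∫ x in Abar, ‖x‖ ^ 2 / 2 * Real.exp (-(‖x‖ ^ 2 / 2)) :=
    setIntegral_nonneg hmeas fun x _ => by positivity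
  have h2n : (0:ℝ) ≤ 2/(n:ℝ) := by positivity
  have hreal : (∫ x in Abar, Real.exp (-(‖x‖ ^ 2 / 2))) =
      2/(n:ℝ) * ∫ x in Abar, ‖x‖ ^ 2 / 2 * Real.exp (-(‖x‖ ^ 2 / 2)) := by
    have := hJK
    rw [← hJr, ← hKr, ← ENNReal.ofReal_mul h2n] at this
    exact (ENNReal.ofReal_eq_ofReal_iff hJnn (by positivity)).1 this
  have hn' : (n:ℝ) ≠ 0 := Nat.cast_ne_zero.2 hn.ne'
  rw [hreal]
  field_simp

end Aux

/-- If `Ā ⊆ ℝⁿ` is a measurable cone of positive Gaussian measure, the differential entropy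
of `X_A ~ γ_A` (with density `𝟙_Ā · f_γ / γ(Ā)`) equals `(n/2) ln(2πe γ(Ā)^{2/n})`. -/
theorem stmt8 (n : ℕ) (hn : 0 < n) (Abar : Set (EuclideanSpace ℝ (Fin n)))
    (hmeas : MeasurableSet Abar)
    (hcone : ∀ x ∈ Abar, ∀ t : ℝ, 0 < t → t • x ∈ Abar)
    (hpos : 0 < stdGaussian n Abar) :
    -∫ x, Real.log
        (Set.indicator Abar (fun y => stdGaussianDensity n y / (stdGaussian n Abar).toReal) x)
        ∂((stdGaussian n Abar)⁻¹ • (stdGaussian n).restrict Abar) =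
      ((n : ℝ) / 2) *
        Real.log (2 * π * Real.exp 1 * ((stdGaussian n Abar).toReal) ^ ((2 : ℝ) / n)) := by
  classical
  set G : ℝ := (stdGaussian n Abar).toReal with hGdef
  set c2 : ℝ := (2 * π) ^ (-(n : ℝ) / 2) with hc2def
  have hc2pos : (0:ℝ) < c2 := Real.rpow_pos_of_pos (by positivity) _
  have hdenspos : ∀ x : EuclideanSpace ℝ (Fin n), 0 < stdGaussianDensity n x := fun x => by
    rw [stdGaussianDensity]
    positivity
  have hdensmeas : Measurable (fun x : EuclideanSpace ℝ (Fin n) => stdGaussianDensity n x) := by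
    unfold stdGaussianDensity
    fun_prop
  have hdensint : Integrable (fun x : EuclideanSpace ℝ (Fin n) => stdGaussianDensity n x) := by
    have h := (aux_integrable_gauss n (b := 1/2) (by norm_num)).const_mul c2
    refine h.congr (Filter.Eventually.of_forall fun x => ?_)
    dsimp only
    rw [stdGaussianDensity, ← hc2def]
    congr 2
    ring
  have hgtop : stdGaussian n Abar ≠ ⊤ := by
    rw [stdGaussian, withDensity_apply _ hmeas]
    exact ((lintegral_mono' Measure.restrict_le_self le_rfl).trans_lt
      hdensint.lintegral_lt_top).ne
  have hG : 0 < G := ENNReal.toReal_pos hpos.ne' hgtop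
  have hn' : (n:ℝ) ≠ 0 := Nat.cast_ne_zero.2 hn.ne'
  have hGeq : ∫ x in Abar, stdGaussianDensity n x = G := by
    rw [hGdef, stdGaussian, withDensity_apply _ hmeas,
      ← ofReal_integral_eq_lintegral_ofReal hdensint.integrableOn
        (Filter.Eventually.of_forall fun x => (hdenspos x).le),
      ENNReal.toReal_ofReal (setIntegral_nonneg hmeas fun x _ => (hdenspos x).le)]
  have hJnn : 0 ≤ ∫ x in Abar, Real.exp (-(‖x‖ ^ 2 / 2)) :=
    setIntegral_nonneg hmeas fun x _ => (Real.exp_pos _).le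
  have hGJ : G = c2 * ∫ x in Abar, Real.exp (-(‖x‖ ^ 2 / 2)) := by
    rw [← hGeq, ← integral_const_mul]
    refine setIntegral_congr_fun hmeas fun x _ => ?_
    rw [stdGaussianDensity, ← hc2def]
    congr 2
    ring
  -- the inner integral
  have hres : (stdGaussian n).restrict Abar =
      (volume.restrict Abar).withDensity
        (fun x => ENNReal.ofReal (stdGaussianDensity n x)) := by
    rw [stdGaussian, restrict_withDensity hmeas]
  have hlog : (∫ x, Real.log (Set.indicator Abar (fun y => stdGaussianDensity n y / G) x)
        ∂((stdGaussian n).restrict Abar)) =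
      ∫ x in Abar, stdGaussianDensity n x * Real.log (stdGaussianDensity n x / G) := by
    rw [hres]
    have hrepr : (fun x : EuclideanSpace ℝ (Fin n) => ENNReal.ofReal (stdGaussianDensity n x)) =
        (fun x => ((Real.toNNReal (stdGaussianDensity n x) : NNReal) : ENNReal)) := rfl
    rw [hrepr, integral_withDensity_eq_integral_smul (hdensmeas.real_toNNReal) _]
    refine setIntegral_congr_fun hmeas fun x hx => ?_
    rw [Set.indicator_of_mem hx]
    simp [NNReal.smul_def, Real.coe_toNNReal _ (hdenspos x).le]
  set C : ℝ := -(n:ℝ)/2 * Real.log (2*π) - Real.log G with hCdef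
  have hlogval : ∀ x ∈ Abar, stdGaussianDensity n x * Real.log (stdGaussianDensity n x / G) =
      stdGaussianDensity n x * C - c2 * (‖x‖ ^ 2 / 2 * Real.exp (-(‖x‖ ^ 2 / 2))) := by
    intro x _
    have h1 : Real.log (stdGaussianDensity n x / G) =
        -(n:ℝ)/2 * Real.log (2*π) + (-‖x‖ ^ 2 / 2) - Real.log G := by
      rw [Real.log_div (hdenspos x).ne' hG.ne', stdGaussianDensity,
        Real.log_mul (by positivity) (Real.exp_ne_zero _),
        Real.log_rpow (by positivity), Real.log_exp]
    rw [h1, stdGaussianDensity, ← hc2def, hCdef,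
      show Real.exp (-‖x‖ ^ 2 / 2) = Real.exp (-(‖x‖ ^ 2 / 2)) by rw [neg_div]]
    ring
  have hsplit : (∫ x in Abar, stdGaussianDensity n x * Real.log (stdGaussianDensity n x / G)) =
      G * C - ((n:ℝ)/2) * G := by
    rw [setIntegral_congr_fun hmeas hlogval, integral_sub
      (hdensint.integrableOn.mul_const C)
      ((aux_integrable_sq_gauss n).integrableOn.const_mul c2),
      integral_mul_const, integral_const_mul, hGeq,
      aux_moment hn Abar hmeas hcone, hGJ]
    ring
  -- assemble
  rw [integral_smul_measure, ENNReal.toReal_inv, ← hGdef, hlog, hsplit, smul_eq_mul,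
    Real.log_mul (by positivity) (Real.rpow_pos_of_pos hG _).ne',
    Real.log_mul (by positivity) (Real.exp_ne_zero 1),
    Real.log_exp, Real.log_rpow hG, hCdef]
  field_simp
  ring
end
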